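/- Let K, N ≥ 1, let x ∈ ℝ^N be nonzero, set ω = ‖x‖, and define f(v, U) = v⊤ U x for v ∈ ℝ^K and U ∈ ℝ^{K×N}. For each i ∈ {1,…,K} let u_{±,i} = (ω e_i, ± e_i x⊤)/(√2 ω) be the normalized eigenvectors of the Hessian of f with eigenvalues ±ω, and let ∇f(v, U) = (U x, v x⊤) be the gradient of f. Define J_±² = Σ_{i=1}^K ⟨∇f(v, U), u_{±,i}⟩². Then ω^{−1}(J_+² − J_−²) = 2 f(v, U). In particular, the conserved quantity E = ω^{−1}(J_+² − J_−²) − 2f vanishes identically, so the one-hidden-layer linear network on one datapoint is the quartic model with E = 0 and eigenvalues ±‖x‖. -/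

import Mathlib

open Matrix

/-- The parameter space of a one-hidden-layer linear network: `(v, U)` with
`v ∈ ℝ^K` and `U ∈ ℝ^{K×N}`, i.e. `ℝ^{K + KN}`. -/
abbrev ParamSpace (K N : ℕ) := (Fin K → ℝ) × Matrix (Fin K) (Fin N) ℝ

/-- The standard Euclidean inner product on `ParamSpace K N ≃ ℝ^{K + KN}`. -/
def pairInner {K N : ℕ} (p q : ParamSpace K N) : ℝ :=
  p.1 ⬝ᵥ q.1 + ∑ i, ∑ j, p.2 i j * q.2 i j

/-- For the one-hidden-layer linear network `f(v, U) = vᵀ U x` on one nonzero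
datapoint `x`, with `ω = ‖x‖`, normalized Hessian eigenvectors
`u_{±,i} = (ω e_i, ± e_i xᵀ)/(√2 ω)` and gradient `∇f = (U x, v xᵀ)`, the
squared projections `J_±² = Σ_i ⟨∇f, u_{±,i}⟩²` satisfy
`ω⁻¹ (J_+² − J_−²) = 2 f(v, U)`; i.e. the conserved quantity
`E = ω⁻¹(J_+² − J_−²) − 2f` vanishes identically. -/
theorem stmt18 (K N : ℕ) (hK : 1 ≤ K) (hN : 1 ≤ N)
    (x : EuclideanSpace ℝ (Fin N)) (hx : x ≠ 0) (ω : ℝ) (hω : ω = ‖x‖)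
    (v : Fin K → ℝ) (U : Matrix (Fin K) (Fin N) ℝ)
    (gradf : ParamSpace K N)
    (hgrad : gradf = (U.mulVec x, Matrix.of fun i j => v i * x j))
    (up um : Fin K → ParamSpace K N)
    (hup : ∀ i, up i = (Real.sqrt 2 * ω)⁻¹ •
      ((ω • (Pi.single i (1 : ℝ) : Fin K → ℝ),
        Matrix.of fun a j => (Pi.single i (1 : ℝ) : Fin K → ℝ) a * x j) :
        ParamSpace K N))
    (hum : ∀ i, um i = (Real.sqrt 2 * ω)⁻¹ •
      ((ω • (Pi.single i (1 : ℝ) : Fin K → ℝ),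
        -(Matrix.of fun a j => (Pi.single i (1 : ℝ) : Fin K → ℝ) a * x j :
          Matrix (Fin K) (Fin N) ℝ)) : ParamSpace K N))
    (Jp2 Jm2 : ℝ)
    (hJp : Jp2 = ∑ i, (pairInner gradf (up i)) ^ 2)
    (hJm : Jm2 = ∑ i, (pairInner gradf (um i)) ^ 2) :
    ω⁻¹ * (Jp2 - Jm2) = 2 * (v ⬝ᵥ U.mulVec x) := by
  have hω0 : ω ≠ 0 := by
    rw [hω]; exact norm_ne_zero_iff.mpr hx
  have hx2 : ∑ j, x j * x j = ω ^ 2 := by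
    rw [hω, EuclideanSpace.norm_eq, Real.sq_sqrt (by positivity)]
    simp [Real.norm_eq_abs, sq_abs, pow_two]
  set c : ℝ := (Real.sqrt 2 * ω)⁻¹ with hc
  have hc2 : c ^ 2 = (2 * ω ^ 2)⁻¹ := by
    rw [hc, inv_pow, mul_pow, Real.sq_sqrt (by norm_num)]
  have hsingle : ∀ i : Fin K, ∀ (w : Fin K → ℝ),
      ∑ a, w a * (Pi.single i (1 : ℝ) : Fin K → ℝ) a = w i := by
    intro i w
    simp [Pi.single_apply, Finset.sum_ite_eq', mul_comm]
  have key1 : ∀ i, pairInner gradf (up i) = c * (ω * U.mulVec x i + v i * ω ^ 2) := by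
    intro i
    rw [hup, hgrad]
    simp only [pairInner, Prod.smul_fst, Prod.smul_snd, Matrix.smul_apply, Matrix.of_apply,
      Pi.smul_apply, smul_eq_mul, dotProduct]
    have h1 : ∀ a : Fin K,
        U.mulVec x a * (c * (ω * (Pi.single i (1:ℝ) : Fin K → ℝ) a)) =
          c * ω * (U.mulVec x a * (Pi.single i (1:ℝ) : Fin K → ℝ) a) := by intros; ring
    rw [Finset.sum_congr rfl fun a _ => h1 a, ← Finset.mul_sum, hsingle i]
    have h2 : ∀ a : Fin K, ∑ j, v a * x j * (c * ((Pi.single i (1:ℝ) : Fin K → ℝ) a * x j)) =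
        c * (v a * (Pi.single i (1:ℝ) : Fin K → ℝ) a) * ∑ j, x j * x j := by
      intro a
      rw [Finset.mul_sum]
      exact Finset.sum_congr rfl fun j _ => by ring
    rw [Finset.sum_congr rfl fun a _ => h2 a, hx2, ← Finset.sum_mul, ← Finset.mul_sum,
      hsingle i]
    ring
  have key2 : ∀ i, pairInner gradf (um i) = c * (ω * U.mulVec x i - v i * ω ^ 2) := by
    intro i
    rw [hum, hgrad]
    simp only [pairInner, Prod.smul_fst, Prod.smul_snd, Matrix.smul_apply, Matrix.neg_apply,
      Matrix.of_apply, Pi.smul_apply, smul_eq_mul, dotProduct]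
    have h1 : ∀ a : Fin K, U.mulVec x a * (c * (ω * (Pi.single i (1:ℝ) : Fin K → ℝ) a)) =
        c * ω * (U.mulVec x a * (Pi.single i (1:ℝ) : Fin K → ℝ) a) := by intros; ring
    rw [Finset.sum_congr rfl fun a _ => h1 a, ← Finset.mul_sum, hsingle i]
    have h2 : ∀ a : Fin K, ∑ j, v a * x j * (c * -((Pi.single i (1:ℝ) : Fin K → ℝ) a * x j)) =
        -(c * (v a * (Pi.single i (1:ℝ) : Fin K → ℝ) a)) * ∑ j, x j * x j := by
      intro a
      rw [Finset.mul_sum]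
      exact Finset.sum_congr rfl fun j _ => by ring
    rw [Finset.sum_congr rfl fun a _ => h2 a, hx2, ← Finset.sum_mul, Finset.sum_neg_distrib,
      ← Finset.mul_sum, hsingle i]
    ring
  have hdiff : Jp2 - Jm2 = 2 * ω * (v ⬝ᵥ U.mulVec x) := by
    rw [hJp, hJm, ← Finset.sum_sub_distrib, dotProduct, Finset.mul_sum]
    refine Finset.sum_congr rfl fun i _ => ?_
    rw [key1, key2, mul_pow, mul_pow, hc2]
    field_simp
    ring
  rw [hdiff]
  field_simp
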